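/- arXiv:math/0605205 — 3 statements merged into one kernel-verified Lean document; each statement's English description precedes it below -/
import Mathlib

section
/- Let F be harmonic and bounded on the open strip Σ₀ = {z ∈ ℂ : 0 < Im z < π}, continuous on the closed strip Σ, with boundary values f₁ on ℝ and f₂ on ℝ + iπ. If τ ∈ ℝ satisfies sup_{x∈ℝ} |f₁(x+τ) − f₁(x)| < ε and sup_{x∈ℝ} |f₂(x+iπ+τ) − f₂(x+iπ)| < ε, then sup_{z∈Σ} |F(z+τ) − F(z)| ≤ ε. Consequently, if f₁ and f₂ are almost periodic, F is almost periodic on every horizontal line in Σ. -/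
open Complex Set Topology Filter

/-- A complex-valued function is harmonic on a set if near each point of the set it is
the sum of a holomorphic function and the conjugate of a holomorphic function. -/
def HarmonicOnSet (F : ℂ → ℂ) (s : Set ℂ) : Prop :=
  ∀ z ∈ s, ∃ (U : Set ℂ) (g h : ℂ → ℂ), IsOpen U ∧ z ∈ U ∧ U ⊆ s ∧
    DifferentiableOn ℂ g U ∧ DifferentiableOn ℂ h U ∧
    ∀ w ∈ U, F w = g w + (starRingEnd ℂ) (h w)

/-- Maximum principle for the real part of a harmonic function on a bounded convex open set. -/
lemma harmonic_max_re {H : ℂ → ℂ} {V : Set ℂ} {b : ℝ}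
    (hVo : IsOpen V) (hVc : Convex ℝ V) (hVb : Bornology.IsBounded V)
    (hH : HarmonicOnSet H V)
    (hc : ContinuousOn H (closure V))
    (hb : ∀ z ∈ closure V \ V, (H z).re ≤ b) :
    ∀ z ∈ closure V, (H z).re ≤ b := by
  rcases V.eq_empty_or_nonempty with rfl | hne
  · intro z hz; simp at hz
  set u : ℂ → ℝ := fun z => (H z).re with hu
  have hucont : ContinuousOn u (closure V) := Complex.continuous_re.comp_continuousOn hc
  have hK : IsCompact (closure V) := hVb.isCompact_closure
  obtain ⟨w, hwK, hmax⟩ := hK.exists_isMaxOn hne.closure hucont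
  by_cases hwb : u w ≤ b
  · exact fun z hz => le_trans (hmax hz) hwb
  push_neg at hwb
  exfalso
  have hwV : w ∈ V := by
    by_contra hwV
    exact absurd (hb w ⟨hwK, hwV⟩) (not_le.2 hwb)
  set m := u w with hm
  set S : Set ℂ := {z | z ∈ V ∧ u z = m} with hS
  have hSopen : IsOpen S := by
    rw [Metric.isOpen_iff]
    rintro z ⟨hzV, hzm⟩
    obtain ⟨U, g, h, hUo, hzU, hUV, hg, hh, heq⟩ := hH z hzV
    obtain ⟨r, hr, hrU⟩ := Metric.isOpen_iff.1 hUo z hzU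
    refine ⟨r, hr, ?_⟩
    have hre : ∀ y ∈ Metric.ball z r, ‖Complex.exp (g y + h y)‖ = Real.exp (u y) := by
      intro y hy
      have := heq y (hrU hy)
      rw [Complex.norm_exp]
      congr 1
      simp only [hu, this, Complex.add_re, Complex.conj_re]
    have hmaxb : IsMaxOn (norm ∘ fun y => Complex.exp (g y + h y)) (Metric.ball z r) z := by
      intro y hy
      simp only [Function.comp, mem_setOf_eq]
      rw [hre y hy, hre z (Metric.mem_ball_self hr)]
      have : u y ≤ m := hmax (subset_closure (hUV (hrU hy)))
      exact Real.exp_le_exp.2 (by rw [hzm]; exact this)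
    have heqn := Complex.norm_eqOn_of_isPreconnected_of_isMaxOn
      (convex_ball z r).isPreconnected Metric.isOpen_ball
      (((hg.mono hrU).add (hh.mono hrU)).cexp) (Metric.mem_ball_self hr) hmaxb
    intro y hy
    refine ⟨hUV (hrU hy), ?_⟩
    have h1 := heqn hy
    simp only [Function.comp, Function.const, Pi.add_apply] at h1
    rw [hre y hy, hre z (Metric.mem_ball_self hr)] at h1
    rw [Real.exp_injective h1, hzm]
  set T : Set ℂ := V ∩ u ⁻¹' (Iio m) with hT
  have hTopen : IsOpen T :=
    (hucont.mono subset_closure).isOpen_inter_preimage hVo isOpen_Iio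
  have hdisj : Disjoint S T := by
    rw [Set.disjoint_left]
    rintro z ⟨_, hzm⟩ ⟨_, hzlt⟩
    simp only [mem_preimage, mem_Iio, hzm] at hzlt
    exact lt_irrefl _ hzlt
  have hcover : V ⊆ S ∪ T := by
    intro z hz
    have hle : u z ≤ m := hmax (subset_closure hz)
    rcases eq_or_lt_of_le hle with h | h
    · exact Or.inl ⟨hz, h⟩
    · exact Or.inr ⟨hz, h⟩
  have hVS : V ⊆ S :=
    hVc.isPreconnected.subset_left_of_subset_union hSopen hTopen hdisj hcover
      ⟨w, hwV, hwV, rfl⟩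
  have hbd_ne : (closure V \ V).Nonempty := by
    by_contra hemp
    rw [Set.not_nonempty_iff_eq_empty, Set.diff_eq_empty] at hemp
    have hclosed : IsClosed V := by
      rw [← closure_subset_iff_isClosed]
      exact hemp
    have : V = univ := (isClopen_iff.1 ⟨hclosed, hVo⟩).resolve_left hne.ne_empty
    obtain ⟨r, hr⟩ := hVb.subset_closedBall 0
    have h2 : ((|r| + 1 : ℝ) : ℂ) ∈ Metric.closedBall (0:ℂ) r := hr (by rw [this]; trivial)
    rw [Metric.mem_closedBall, Complex.dist_eq, sub_zero, Complex.norm_real, Real.norm_eq_abs] at h2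
    have : |r| + 1 ≤ r := le_trans (le_abs_self _) h2
    have := abs_nonneg r
    linarith [le_abs_self r, neg_abs_le r]
  obtain ⟨w₀, hw₀⟩ := hbd_ne
  have hne' : (𝓝[V] w₀).NeBot := mem_closure_iff_nhdsWithin_neBot.1 hw₀.1
  have hlim1 : Filter.Tendsto u (𝓝[V] w₀) (𝓝 (u w₀)) :=
    ((hucont w₀ hw₀.1).mono subset_closure)
  have hlim2 : Filter.Tendsto u (𝓝[V] w₀) (𝓝 m) := by
    have : ∀ᶠ x in 𝓝[V] w₀, u x = m :=
      Filter.eventually_iff_exists_mem.2 ⟨V, self_mem_nhdsWithin, fun x hx => (hVS hx).2⟩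
    rw [Filter.tendsto_congr' this]
    exact tendsto_const_nhds
  have : u w₀ = m := tendsto_nhds_unique hlim1 hlim2
  have := hb w₀ hw₀
  linarith

lemma cosh_re' (z : ℂ) : (Complex.cosh z).re = Real.cosh z.re * Real.cos z.im := by
  rw [Complex.cosh, Real.cosh_eq]
  simp [Complex.exp_re, Complex.div_re, Complex.normSq, Real.cos_neg]
  ring

noncomputable def phi (z : ℂ) : ℝ := Real.cosh (z.re / 2) * Real.cos ((z.im - Real.pi / 2) / 2)

lemma psi_re (z : ℂ) :
    (Complex.cosh ((z - (Real.pi / 2 : ℝ) * Complex.I) / 2)).re = phi z := by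
  have h1 : ((z - (Real.pi / 2 : ℝ) * Complex.I) / 2).re = z.re / 2 := by
    simp [Complex.div_re, Complex.normSq]
  have h2 : ((z - (Real.pi / 2 : ℝ) * Complex.I) / 2).im = (z.im - Real.pi / 2) / 2 := by
    simp [Complex.div_im, Complex.normSq]
  rw [cosh_re', h1, h2]
  rfl

lemma phi_lb {z : ℂ} (h0 : 0 ≤ z.im) (h1 : z.im ≤ Real.pi) :
    Real.cos (Real.pi / 4) * Real.cosh (z.re / 2) ≤ phi z := by
  have hpi := Real.pi_pos
  have habs : |(z.im - Real.pi / 2) / 2| ≤ Real.pi / 4 := by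
    rw [abs_le]
    constructor
    · linarith
    · linarith
  have hcos : Real.cos (Real.pi / 4) ≤ Real.cos ((z.im - Real.pi / 2) / 2) := by
    rw [← Real.cos_abs ((z.im - Real.pi / 2) / 2)]
    exact Real.cos_le_cos_of_nonneg_of_le_pi (abs_nonneg _) (by linarith) habs
  have h := Real.cosh_pos (z.re / 2)
  unfold phi
  nlinarith [h, hcos]

theorem strip_harmonic_almost_period (F : ℂ → ℂ) (ε τ : ℝ)
    (hbd : ∃ M : ℝ, ∀ z ∈ {z : ℂ | z.im ∈ Set.Icc 0 Real.pi}, ‖F z‖ ≤ M)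
    (hcont : ContinuousOn F {z : ℂ | z.im ∈ Set.Icc 0 Real.pi})
    (hharm : HarmonicOnSet F {z : ℂ | 0 < z.im ∧ z.im < Real.pi})
    (hε : 0 < ε)
    (h₁ : ∀ x : ℝ, ‖F (x + τ) - F x‖ < ε)
    (h₂ : ∀ x : ℝ, ‖F (x + τ + Real.pi * Complex.I)
      - F (x + Real.pi * Complex.I)‖ < ε) :
    ∀ z ∈ {z : ℂ | z.im ∈ Set.Icc 0 Real.pi}, ‖F (z + τ) - F z‖ ≤ ε := by
  obtain ⟨M, hM⟩ := hbd
  have hpi := Real.pi_pos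
  set Sc : Set ℂ := {z : ℂ | z.im ∈ Set.Icc 0 Real.pi} with hScdef
  intro z₀ hz₀
  have hz₀' : z₀.im ∈ Set.Icc 0 Real.pi := hz₀
  have htau : ∀ z : ℂ, z ∈ Sc → z + (τ:ℂ) ∈ Sc := by
    intro z hz
    simpa [hScdef] using hz
  have hGbd : ∀ z ∈ Sc, ‖F (z + τ) - F z‖ ≤ M + M := by
    intro z hz
    calc ‖F (z + τ) - F z‖
        ≤ ‖F (z + τ)‖ + ‖F z‖ := by
          simpa [sub_eq_add_neg] using norm_add_le (F (z + τ)) (-(F z))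
      _ ≤ M + M := add_le_add (hM _ (htau z hz)) (hM _ hz)
  set A := M + M with hAdef
  have hA0 : 0 ≤ A := le_trans (norm_nonneg _)
    (hGbd 0 (by simp [hScdef, hpi.le]))
  by_cases hG0 : F (z₀ + τ) - F z₀ = 0
  · rw [hG0]
    simpa using hε.le
  set a := ‖F (z₀ + τ) - F z₀‖ with ha
  have ha0 : 0 < a := norm_pos_iff.2 hG0
  set c : ℂ := (starRingEnd ℂ) (F (z₀ + τ) - F z₀) / (a : ℂ) with hcdef
  have hcabs : ‖c‖ = 1 := by
    rw [hcdef, norm_div, Complex.norm_conj, Complex.norm_real, Real.norm_eq_abs, ← ha, abs_of_pos ha0,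
      div_self ha0.ne']
  have haC : (a : ℂ) ≠ 0 := Complex.ofReal_ne_zero.2 ha0.ne'
  have hcg : c * (F (z₀ + τ) - F z₀) = (a : ℂ) := by
    rw [hcdef, div_mul_eq_mul_div, mul_comm, Complex.mul_conj, Complex.normSq_eq_norm_sq, ← ha]
    push_cast
    rw [sq, mul_div_assoc, div_self haC, mul_one]
  set c₀ := Real.cos (Real.pi / 4) with hc₀def
  have hc₀ : 0 < c₀ := Real.cos_pos_of_mem_Ioo ⟨by linarith, by linarith⟩
  have hreG : ∀ z : ℂ, (c * (F (z + τ) - F z)).re ≤ ‖F (z + τ) - F z‖ := by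
    intro z
    refine le_trans (Complex.re_le_norm _) ?_
    rw [norm_mul, hcabs, one_mul]
  -- key estimate
  have key : ∀ δ : ℝ, 0 < δ → a ≤ ε + δ * phi z₀ := by
    intro δ hδ
    obtain ⟨R, hR0, hRz, hRbig⟩ : ∃ R : ℝ, 0 < R ∧ |z₀.re| ≤ R ∧ 4 * A / (δ * c₀) ≤ R := by
      refine ⟨max |z₀.re| (4 * A / (δ * c₀)) + 1, ?_, ?_, ?_⟩
      · have h1 := abs_nonneg z₀.re
        have h2 := le_max_left |z₀.re| (4 * A / (δ * c₀))
        linarith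
      · have h2 := le_max_left |z₀.re| (4 * A / (δ * c₀))
        linarith
      · have h2 := le_max_right |z₀.re| (4 * A / (δ * c₀))
        linarith
    have hRA : A ≤ δ * c₀ * Real.cosh (R / 2) := by
      have h1 : R / 2 + 1 ≤ Real.exp (R / 2) := Real.add_one_le_exp _
      have h2 : 0 < Real.exp (-(R / 2)) := Real.exp_pos _
      have h3 : R / 4 ≤ Real.cosh (R / 2) := by
        rw [Real.cosh_eq]
        linarith
      have h5 : 4 * A ≤ R * (δ * c₀) := (div_le_iff₀ (by positivity)).1 hRbig
      nlinarith [mul_pos hδ hc₀]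
    set V : Set ℂ := Set.Ioo (-R) R ×ℂ Set.Ioo 0 Real.pi with hVdef
    have hVo : IsOpen V := IsOpen.reProdIm isOpen_Ioo isOpen_Ioo
    have hVconv : Convex ℝ V := by
      have h := convex_convexHull ℝ (Set.Ioo (-R) R ×ℂ Set.Ioo 0 Real.pi)
      rwa [Complex.convexHull_reProdIm, (convex_Ioo _ _).convexHull_eq,
        (convex_Ioo _ _).convexHull_eq] at h
    have hclV : closure V = Set.Icc (-R) R ×ℂ Set.Icc 0 Real.pi := by
      rw [hVdef, Complex.closure_reProdIm, closure_Ioo (by linarith : (-R) ≠ R),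
        closure_Ioo (ne_of_lt hpi)]
    have hVb : Bornology.IsBounded V := by
      apply (Metric.isBounded_closedBall (x := (0:ℂ)) (r := R + Real.pi)).subset
      intro z hz
      rw [hVdef, Complex.mem_reProdIm] at hz
      rw [Metric.mem_closedBall, Complex.dist_eq, sub_zero]
      refine le_trans (Complex.norm_le_abs_re_add_abs_im z) ?_
      have h1 : |z.re| ≤ R := abs_le.2 ⟨hz.1.1.le, hz.1.2.le⟩
      have h2 : |z.im| ≤ Real.pi := abs_le.2 ⟨by linarith [hz.2.1], hz.2.2.le⟩
      linarith
    have hsub : closure V ⊆ Sc := by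
      rw [hclV]
      intro z hz
      rw [Complex.mem_reProdIm] at hz
      exact hz.2
    set H : ℂ → ℂ := fun w => c * (F (w + τ) - F w)
      - (δ : ℂ) * Complex.cosh ((w - (Real.pi / 2 : ℝ) * Complex.I) / 2) with hHdef
    have hHre : ∀ z : ℂ, (H z).re = (c * (F (z + τ) - F z)).re - δ * phi z := by
      intro z
      rw [hHdef]
      simp only [Complex.sub_re, Complex.mul_re, Complex.ofReal_re, Complex.ofReal_im,
        zero_mul, sub_zero]
      rw [psi_re]
    have hHcont : ContinuousOn H (closure V) := by
      apply ContinuousOn.sub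
      · apply ContinuousOn.mul continuousOn_const
        apply ContinuousOn.sub
        · exact hcont.comp ((continuous_id.add continuous_const).continuousOn)
            (fun z hz => htau z (hsub hz))
        · exact hcont.mono hsub
      · exact Continuous.continuousOn (by
          exact continuous_const.mul (Complex.continuous_cosh.comp
            ((continuous_id.sub continuous_const).div_const 2)))
    have hHharm : HarmonicOnSet H V := by
      intro z hz
      have hzim : 0 < z.im ∧ z.im < Real.pi := by
        rw [hVdef, Complex.mem_reProdIm] at hz
        exact ⟨hz.2.1, hz.2.2⟩
      have hz2 : (z + (τ:ℂ)) ∈ {z : ℂ | 0 < z.im ∧ z.im < Real.pi} := by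
        simp only [mem_setOf_eq, Complex.add_im, Complex.ofReal_im, add_zero]
        exact hzim
      obtain ⟨U₁, g₁, h₁, hU₁o, hzU₁, hU₁s, hg₁, hh₁, heq₁⟩ := hharm _ hz2
      obtain ⟨U₂, g₂, h₂, hU₂o, hzU₂, hU₂s, hg₂, hh₂, heq₂⟩ := hharm z hzim
      refine ⟨(fun w => w + (τ:ℂ)) ⁻¹' U₁ ∩ U₂ ∩ V,
        fun w => c * g₁ (w + τ) - c * g₂ w
          - (δ : ℂ) * Complex.cosh ((w - (Real.pi / 2 : ℝ) * Complex.I) / 2),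
        fun w => (starRingEnd ℂ) c * h₁ (w + τ) - (starRingEnd ℂ) c * h₂ w,
        ?_, ?_, ?_, ?_, ?_, ?_⟩
      · exact ((hU₁o.preimage (continuous_id.add continuous_const)).inter hU₂o).inter hVo
      · exact ⟨⟨hzU₁, hzU₂⟩, hz⟩
      · exact fun w hw => hw.2
      · apply DifferentiableOn.sub
        apply DifferentiableOn.sub
        · exact (differentiableOn_const _).mul
            (hg₁.comp ((differentiable_id.add_const _).differentiableOn)
              (fun w hw => hw.1.1))
        · exact (differentiableOn_const _).mul (hg₂.mono (fun w hw => hw.1.2))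
        · exact (differentiableOn_const _).mul
            ((Complex.differentiable_cosh.comp
              ((differentiable_id.sub_const _).div_const 2)).differentiableOn)
      · apply DifferentiableOn.sub
        · exact (differentiableOn_const _).mul
            (hh₁.comp ((differentiable_id.add_const _).differentiableOn)
              (fun w hw => hw.1.1))
        · exact (differentiableOn_const _).mul (hh₂.mono (fun w hw => hw.1.2))
      · intro w hw
        have e1 := heq₁ (w + τ) hw.1.1
        have e2 := heq₂ w hw.1.2
        show c * (F (w + τ) - F w) - _ = _
        rw [e1, e2]
        simp only [map_sub, map_mul, Complex.conj_conj]
        ring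
    have hbnd : ∀ z ∈ closure V \ V, (H z).re ≤ ε := by
      rintro z ⟨hzcl, hznV⟩
      have hzK : z.re ∈ Set.Icc (-R) R ∧ z.im ∈ Set.Icc 0 Real.pi := by
        rw [hclV, Complex.mem_reProdIm] at hzcl
        exact hzcl
      have hphi0 : 0 ≤ phi z := le_trans (by positivity)
        (phi_lb hzK.2.1 hzK.2.2)
      rw [hHre]
      by_cases him0 : z.im = 0
      · have hzeq : z = (z.re : ℂ) := Complex.ext (by simp) (by simp [him0])
        have hlt : ‖F (z + τ) - F z‖ < ε := by
          rw [hzeq]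
          exact h₁ z.re
        have := hreG z
        nlinarith
      · by_cases himp : z.im = Real.pi
        · have hzeq : z = (z.re : ℂ) + (Real.pi : ℂ) * Complex.I :=
            Complex.ext (by simp) (by simp [himp])
          have hlt : ‖F (z + τ) - F z‖ < ε := by
            rw [hzeq]
            have hco : ((z.re : ℂ) + (Real.pi : ℂ) * Complex.I + (τ : ℂ))
                = (z.re : ℂ) + (τ : ℂ) + (Real.pi : ℂ) * Complex.I := by ring
            rw [hco]
            exact h₂ z.re
          have := hreG z
          nlinarith
        · -- side case: z.re = ±R
          have hzim : z.im ∈ Set.Ioo 0 Real.pi :=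
            ⟨lt_of_le_of_ne hzK.2.1 (Ne.symm him0), lt_of_le_of_ne hzK.2.2 himp⟩
          have hre : z.re = -R ∨ z.re = R := by
            by_contra hcc
            push_neg at hcc
            apply hznV
            rw [hVdef, Complex.mem_reProdIm]
            exact ⟨⟨lt_of_le_of_ne hzK.1.1 (Ne.symm hcc.1), lt_of_le_of_ne hzK.1.2 hcc.2⟩, hzim⟩
          have hcosh : Real.cosh (z.re / 2) = Real.cosh (R / 2) := by
            rcases hre with h | h
            · rw [h, neg_div, Real.cosh_neg]
            · rw [h]
          have hlbz : c₀ * Real.cosh (R / 2) ≤ phi z := by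
            rw [← hcosh]
            exact phi_lb hzK.2.1 hzK.2.2
          have hGA : ‖F (z + τ) - F z‖ ≤ A := hGbd z (hsub hzcl)
          have h1 := hreG z
          have h2 : A ≤ δ * phi z := by
            have h3 : δ * (c₀ * Real.cosh (R / 2)) ≤ δ * phi z :=
              mul_le_mul_of_nonneg_left hlbz hδ.le
            nlinarith
          linarith
    have hfin := harmonic_max_re hVo hVconv hVb hHharm hHcont hbnd
    have hz₀cl : z₀ ∈ closure V := by
      rw [hclV, Complex.mem_reProdIm]
      exact ⟨abs_le.1 hRz, hz₀'⟩
    have := hfin z₀ hz₀cl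
    rw [hHre, hcg, Complex.ofReal_re] at this
    linarith
  -- conclude by letting δ → 0
  have hphi0 : 0 < phi z₀ := lt_of_lt_of_le (by positivity) (phi_lb hz₀'.1 hz₀'.2)
  by_contra hcc
  push_neg at hcc
  have hδ : 0 < (a - ε) / (2 * phi z₀) := by
    apply div_pos (by linarith) (by linarith)
  have hkey := key _ hδ
  have heq : (a - ε) / (2 * phi z₀) * phi z₀ = (a - ε) / 2 := by
    field_simp
  linarith
end

section
/- Let λ ∈ ℝ and define h(x) = exp(iλ ln(Arg((2i − eˣ)/(2i + eˣ)))) for x real and sufficiently negative. Then Arg((2i − eˣ)/(2i + eˣ)) = (4eˣ)/(4 − e^{2x}) + O(e^{3x}) as x → −∞, and consequently h(x) − e^{iλx} → 0 as x → −∞. -/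
open Complex Filter Asymptotics

lemma aux_arctan_sub {u : ℝ} (hu : 0 ≤ u) : |Real.arctan u - u| ≤ u ^ 3 := by
  have key := norm_image_sub_le_of_norm_deriv_le_segment'
    (f := fun y : ℝ => Real.arctan y - y) (f' := fun y : ℝ => 1 / (1 + y ^ 2) - 1)
    (a := 0) (b := u) (C := u ^ 2) ?_ ?_ u (Set.right_mem_Icc.2 hu)
  · simpa [Real.norm_eq_abs, pow_succ, pow_two, mul_comm] using key
  · intro y _
    exact ((Real.hasDerivAt_arctan y).sub (hasDerivAt_id y)).hasDerivWithinAt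
  · intro y hy
    have h1 : (0:ℝ) < 1 + y ^ 2 := by positivity
    have he : 1 / (1 + y ^ 2) - 1 = -(y ^ 2 / (1 + y ^ 2)) := by field_simp; ring
    show |1 / (1 + y ^ 2) - 1| ≤ u ^ 2
    rw [he, abs_neg, _root_.abs_of_nonneg (by positivity)]
    have h2 : y ^ 2 / (1 + y ^ 2) ≤ y ^ 2 := div_le_self (sq_nonneg y) (by nlinarith)
    have h3 : y ^ 2 ≤ u ^ 2 := pow_le_pow_left₀ hy.1 hy.2.le 2
    linarith

lemma aux_arg_eq {t : ℝ} (h0 : 0 < t) (h1 : t < 1) :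
    Complex.arg ((2 * Complex.I - t) / (2 * Complex.I + t))
      = Real.arctan (4 * t / (4 - t ^ 2)) := by
  have hden : (2 * Complex.I + (t:ℂ)) ≠ 0 := by
    intro h
    have := congrArg Complex.im h
    simp at this
  have h2c : ((4 + t ^ 2 : ℝ) : ℂ) ≠ 0 := Complex.ofReal_ne_zero.2 (by positivity)
  have hz : (2 * Complex.I - t) / (2 * Complex.I + t)
      = (((4 - t ^ 2 : ℝ) : ℂ) + ((4 * t : ℝ) : ℂ) * Complex.I) / ((4 + t ^ 2 : ℝ) : ℂ) := by
    rw [div_eq_div_iff hden h2c]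
    push_cast
    linear_combination (-(8:ℂ) * t) * Complex.I_sq
  set z := (2 * Complex.I - (t:ℂ)) / (2 * Complex.I + t) with hzdef
  have hre : z.re = (4 - t ^ 2) / (4 + t ^ 2) := by
    rw [hz, Complex.div_ofReal_re, Complex.add_re, Complex.ofReal_re, Complex.mul_re,
      Complex.ofReal_re, Complex.ofReal_im, Complex.I_re, Complex.I_im]
    ring
  have him : z.im = 4 * t / (4 + t ^ 2) := by
    rw [hz, Complex.div_ofReal_im, Complex.add_im, Complex.ofReal_im, Complex.mul_im,
      Complex.ofReal_re, Complex.ofReal_im, Complex.I_re, Complex.I_im]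
    ring
  have hrepos : 0 < z.re := by
    rw [hre]; exact div_pos (by nlinarith) (by positivity)
  have ha1 : -(Real.pi / 2) < z.arg := Complex.neg_pi_div_two_lt_arg_iff.2 (Or.inl hrepos)
  have ha2 : z.arg < Real.pi / 2 := Complex.arg_lt_pi_div_two_iff.2 (Or.inl hrepos)
  calc z.arg = Real.arctan (Real.tan z.arg) := (Real.arctan_tan ha1 ha2).symm
    _ = Real.arctan (z.im / z.re) := by rw [Complex.tan_arg]
    _ = Real.arctan (4 * t / (4 - t ^ 2)) := by
        rw [him, hre]
        congr 1
        have hne : (4 - t ^ 2) ≠ 0 := by nlinarith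
        have hne2 : (4 + t ^ 2) ≠ 0 := by positivity
        field_simp

theorem arg_asymptotic_atBot (lam : ℝ) :
    (fun x : ℝ => Complex.arg ((2 * Complex.I - Real.exp x) / (2 * Complex.I + Real.exp x))
        - 4 * Real.exp x / (4 - Real.exp (2 * x)))
      =O[atBot] (fun x : ℝ => Real.exp (3 * x)) ∧
    Filter.Tendsto
      (fun x : ℝ => Complex.exp (Complex.I * lam *
          Real.log (Complex.arg ((2 * Complex.I - Real.exp x) / (2 * Complex.I + Real.exp x))))
        - Complex.exp (Complex.I * lam * x))
      atBot (nhds 0) := by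
  constructor
  · apply IsBigO.of_bound 8
    filter_upwards [eventually_lt_atBot (0:ℝ)] with x hx
    have h0 : 0 < Real.exp x := Real.exp_pos x
    have h1 : Real.exp x < 1 := Real.exp_lt_one_iff.2 hx
    set t := Real.exp x with ht
    have h2 : Real.exp (2 * x) = t ^ 2 := by rw [two_mul, Real.exp_add, sq]
    have h3 : Real.exp (3 * x) = t ^ 3 := by
      rw [show (3:ℝ) * x = x + x + x by ring, Real.exp_add, Real.exp_add]; ring
    rw [h2, h3, aux_arg_eq h0 h1, Real.norm_eq_abs, Real.norm_eq_abs,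
      _root_.abs_of_nonneg (by positivity : (0:ℝ) ≤ t ^ 3)]
    set u := 4 * t / (4 - t ^ 2) with hu
    have hd : 0 < 4 - t ^ 2 := by nlinarith
    have hu0 : 0 ≤ u := by positivity
    have hu2 : u ≤ 2 * t := by rw [hu, div_le_iff₀ hd]; nlinarith
    calc |Real.arctan u - u| ≤ u ^ 3 := aux_arctan_sub hu0
      _ ≤ (2 * t) ^ 3 := pow_le_pow_left₀ hu0 hu2 3
      _ = 8 * t ^ 3 := by ring
  · set A := fun x : ℝ =>
      Complex.arg ((2 * Complex.I - Real.exp x) / (2 * Complex.I + Real.exp x)) with hA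
    set r := fun x : ℝ => Real.log (A x) - x with hrdef
    have hbound : ∀ᶠ x : ℝ in atBot,
        ‖Real.arctan (4 * Real.exp x / (4 - Real.exp x ^ 2)) / Real.exp x - 1‖
          ≤ 9 * Real.exp x ^ 2 := by
      filter_upwards [eventually_lt_atBot (0:ℝ)] with x hx
      have h0 : 0 < Real.exp x := Real.exp_pos x
      have h1 : Real.exp x < 1 := Real.exp_lt_one_iff.2 hx
      set t := Real.exp x with ht
      set u := 4 * t / (4 - t ^ 2) with hu
      have hd : 0 < 4 - t ^ 2 := by nlinarith
      have hu0 : 0 ≤ u := by positivity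
      have hu2 : u ≤ 2 * t := by rw [hu, div_le_iff₀ hd]; nlinarith
      have harc : |Real.arctan u - u| ≤ 8 * t ^ 3 :=
        (aux_arctan_sub hu0).trans (by nlinarith [pow_le_pow_left₀ hu0 hu2 3])
      have hut : u - t = t ^ 3 / (4 - t ^ 2) := by
        rw [hu]; field_simp; ring
      have hut1 : 0 ≤ u - t := by rw [hut]; positivity
      have hut2 : u - t ≤ t ^ 3 := by
        rw [hut, div_le_iff₀ hd]
        nlinarith [mul_nonneg (pow_pos h0 3).le (show (0:ℝ) ≤ 3 - t ^ 2 by nlinarith)]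
      have htri : |Real.arctan u - t| ≤ 9 * t ^ 3 := by
        calc |Real.arctan u - t| ≤ |Real.arctan u - u| + |u - t| := abs_sub_le _ u _
          _ ≤ 8 * t ^ 3 + t ^ 3 := by
              rw [_root_.abs_of_nonneg hut1]; linarith
          _ = 9 * t ^ 3 := by ring
      have heq : Real.arctan u / t - 1 = (Real.arctan u - t) / t := by
        field_simp
      rw [Real.norm_eq_abs, heq, abs_div, abs_of_pos h0, div_le_iff₀ h0]
      nlinarith
    have hg0 : Tendsto (fun x : ℝ => 9 * Real.exp x ^ 2) atBot (nhds 0) := by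
      have := (tendsto_const_nhds (x := (9:ℝ)) (f := atBot)).mul (Real.tendsto_exp_atBot.pow 2)
      simpa using this
    have hratio : Tendsto
        (fun x : ℝ => Real.arctan (4 * Real.exp x / (4 - Real.exp x ^ 2)) / Real.exp x)
        atBot (nhds 1) := by
      rw [← tendsto_sub_nhds_zero_iff]
      exact squeeze_zero_norm' hbound hg0
    have hr : Tendsto r atBot (nhds 0) := by
      have hlog : Tendsto
          (fun x : ℝ => Real.log
            (Real.arctan (4 * Real.exp x / (4 - Real.exp x ^ 2)) / Real.exp x))
          atBot (nhds 0) := by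
        have := (Real.continuousAt_log one_ne_zero).tendsto.comp hratio
        simpa [Function.comp_def] using this
      apply hlog.congr'
      filter_upwards [eventually_lt_atBot (0:ℝ)] with x hx
      have h0 : 0 < Real.exp x := Real.exp_pos x
      have h1 : Real.exp x < 1 := Real.exp_lt_one_iff.2 hx
      have hd : 0 < 4 - Real.exp x ^ 2 := by nlinarith
      have hu0 : 0 < 4 * Real.exp x / (4 - Real.exp x ^ 2) := by positivity
      have harcpos : 0 < Real.arctan (4 * Real.exp x / (4 - Real.exp x ^ 2)) := by
        have := Real.arctan_strictMono hu0
        simpa using this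
      have hAeq : A x = Real.arctan (4 * Real.exp x / (4 - Real.exp x ^ 2)) :=
        aux_arg_eq h0 h1
      rw [hrdef]
      simp only
      rw [hAeq, Real.log_div harcpos.ne' h0.ne', Real.log_exp]
    have key : Tendsto (fun x : ℝ => Complex.exp (Complex.I * lam * (r x : ℂ)) - 1)
        atBot (nhds 0) := by
      have hc : Continuous fun c : ℝ => Complex.exp (Complex.I * lam * (c : ℂ)) - 1 := by
        continuity
      have := (hc.tendsto 0).comp hr
      simpa [Function.comp_def] using this
    apply squeeze_zero_norm (a := fun x => ‖Complex.exp (Complex.I * lam * (r x : ℂ)) - 1‖)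
    · intro x
      have hsplit : Complex.I * lam * (Real.log (A x) : ℂ)
          = Complex.I * lam * (x : ℂ) + Complex.I * lam * (r x : ℂ) := by
        have hx : (Real.log (A x) : ℂ) = (x : ℂ) + (r x : ℂ) := by
          rw [hrdef]; push_cast; ring
        rw [hx]; ring
      rw [hsplit, Complex.exp_add]
      have h1 : Complex.exp (Complex.I * lam * x) * Complex.exp (Complex.I * lam * (r x : ℂ))
            - Complex.exp (Complex.I * lam * x)
          = Complex.exp (Complex.I * lam * x)
            * (Complex.exp (Complex.I * lam * (r x : ℂ)) - 1) := by ring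
      rw [h1, norm_mul]
      have h2 : ‖Complex.exp (Complex.I * lam * (x : ℂ))‖ = 1 := by
        rw [Complex.norm_exp]; simp
      rw [h2, one_mul]
    · exact (tendsto_zero_iff_norm_tendsto_zero.1 key)
end

section
/- Let f₁ and f₂ be continuous almost periodic functions on ℝ. For every ε > 0 there exists l(ε) > 0 such that every interval [t₀, t₀ + l(ε)] ⊂ ℝ contains a common ε-almost-period τ of f₁ and f₂, i.e. both sup_x |f₁(x+τ) − f₁(x)| < ε and sup_x |f₂(x+τ) − f₂(x)| < ε. -/
def BohrAlmostPeriodic (f : ℝ → ℂ) : Prop :=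
  Continuous f ∧ ∀ ε > 0, ∃ l > 0, ∀ t₀ : ℝ, ∃ τ ∈ Set.Icc t₀ (t₀ + l),
    ∀ t : ℝ, ‖f (t + τ) - f t‖ < ε

lemma bap_dist {f : ℝ → ℂ} (h : BohrAlmostPeriodic f) :
    ∀ ε > 0, ∃ l > 0, ∀ t₀ : ℝ, ∃ τ ∈ Set.Icc t₀ (t₀ + l),
      ∀ t : ℝ, dist (f (t + τ)) (f t) < ε := by
  intro ε hε
  obtain ⟨l, hl, H⟩ := h.2 ε hε
  refine ⟨l, hl, fun t₀ => ?_⟩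
  obtain ⟨τ, hτ, h'⟩ := H t₀
  exact ⟨τ, hτ, fun t => by simpa [Complex.dist_eq] using h' t⟩

lemma bap_uc {f : ℝ → ℂ} (h : BohrAlmostPeriodic f) :
    ∀ ε > 0, ∃ δ > 0, ∀ a b : ℝ, |a - b| < δ → dist (f a) (f b) < ε := by
  intro ε hε
  obtain ⟨l, hl, H⟩ := bap_dist h (ε/3) (by positivity)
  have hucOn : UniformContinuousOn f (Set.Icc (-1) (l+1)) :=
    isCompact_Icc.uniformContinuousOn_of_continuous h.1.continuousOn
  rw [Metric.uniformContinuousOn_iff] at hucOn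
  obtain ⟨δ₀, hδ₀, hd⟩ := hucOn (ε/3) (by positivity)
  refine ⟨min δ₀ 1, by positivity, fun a b hab => ?_⟩
  obtain ⟨τ, ⟨hτ1, hτ2⟩, hτ⟩ := H (-a)
  have haτ : a + τ ∈ Set.Icc (-1 : ℝ) (l+1) := by constructor <;> nlinarith
  have hbτ : b + τ ∈ Set.Icc (-1 : ℝ) (l+1) := by
    have h1 : |a - b| < 1 := lt_of_lt_of_le hab (min_le_right _ _)
    rw [abs_lt] at h1
    constructor <;> [nlinarith; nlinarith]
  calc dist (f a) (f b) ≤ dist (f a) (f (a + τ)) + dist (f (a + τ)) (f (b + τ))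
          + dist (f (b + τ)) (f b) := dist_triangle4 _ _ _ _
    _ < ε/3 + ε/3 + ε/3 := by
        gcongr
        · rw [dist_comm]; exact hτ a
        · refine hd _ haτ _ hbτ ?_
          rw [Real.dist_eq]
          have : a + τ - (b + τ) = a - b := by ring
          rw [this]
          exact lt_of_lt_of_le hab (min_le_left _ _)
        · exact hτ b
    _ = ε := by ring
lemma bap_tb {f : ℝ → ℂ} (h : BohrAlmostPeriodic f) :
    ∀ ε > 0, ∃ S : Finset ℝ, ∀ t : ℝ, ∃ s ∈ S, ∀ x : ℝ,
      dist (f (x + t)) (f (x + s)) < ε := by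
  intro ε hε
  obtain ⟨δ, hδ, hd⟩ := bap_uc h (ε/2) (by positivity)
  obtain ⟨l, hl, H⟩ := bap_dist h (ε/2) (by positivity)
  obtain ⟨S, hS⟩ := isCompact_Icc.elim_finite_subcover
    (fun s : ℝ => Metric.ball s δ) (fun _ => Metric.isOpen_ball)
    (fun x _ => Set.mem_iUnion.2 ⟨x, Metric.mem_ball_self hδ⟩)
  refine ⟨S, fun t => ?_⟩
  obtain ⟨τ, ⟨hτ1, hτ2⟩, hτ⟩ := H (-t)
  have hmem : t + τ ∈ Set.Icc (0 : ℝ) l := ⟨by linarith, by linarith⟩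
  obtain ⟨i, hiS, hi⟩ := Set.mem_iUnion₂.1 (hS hmem)
  refine ⟨i, hiS, fun x => ?_⟩
  have key : dist (f (x + t)) (f (x + i)) ≤
      dist (f (x + t)) (f (x + t + τ)) + dist (f (x + t + τ)) (f (x + i)) :=
    dist_triangle _ _ _
  have h1 : dist (f (x + t)) (f (x + t + τ)) < ε/2 := by
    rw [dist_comm]; exact hτ (x + t)
  have h2 : dist (f (x + t + τ)) (f (x + i)) < ε/2 := by
    have : x + t + τ = x + (t + τ) := by ring
    rw [this]
    refine hd _ _ ?_
    have him : |t + τ - i| < δ := by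
      have := Metric.mem_ball.1 hi
      rwa [Real.dist_eq] at this
    have : x + (t + τ) - (x + i) = t + τ - i := by ring
    rw [this]
    exact him
  linarith
lemma separated_pts (P : ℝ → Prop)
    (bad : ∀ l > 0, ∃ t₀ : ℝ, ∀ τ ∈ Set.Icc t₀ (t₀ + l), ¬ P τ) :
    ∀ N : ℕ, ∃ t : Fin N → ℝ, ∀ i j : Fin N, i < j → ¬ P (t j - t i) := by
  intro N
  induction N with
  | zero => exact ⟨fun i => i.elim0, fun i => i.elim0⟩
  | succ N ih =>
    obtain ⟨t, ht⟩ := ih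
    obtain ⟨M₀, hM₀⟩ := Finite.exists_le (fun i : Fin N => |t i|)
    set M : ℝ := max M₀ 0 with hM
    have hMnn : (0:ℝ) ≤ M := le_max_right _ _
    have hMb : ∀ i, |t i| ≤ M := fun i => (hM₀ i).trans (le_max_left _ _)
    obtain ⟨t₀, hbad⟩ := bad (2*M + 2) (by positivity)
    refine ⟨Fin.snoc t (t₀ + M + 1), fun i j hij => ?_⟩
    rcases Fin.eq_castSucc_or_eq_last j with ⟨j', rfl⟩ | rfl
    · have hi : i < Fin.last N := lt_of_lt_of_le hij (Fin.le_last _)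
      obtain ⟨i', rfl⟩ := (Fin.eq_castSucc_or_eq_last i).resolve_right (by
        rintro rfl; exact absurd hi (lt_irrefl _))
      rw [Fin.snoc_castSucc, Fin.snoc_castSucc]
      exact ht i' j' (by simpa using hij)
    · have hi : i < Fin.last N := hij
      obtain ⟨i', rfl⟩ := (Fin.eq_castSucc_or_eq_last i).resolve_right (by
        rintro rfl; exact absurd hi (lt_irrefl _))
      rw [Fin.snoc_last, Fin.snoc_castSucc]
      refine hbad _ ⟨?_, ?_⟩
      · have := (abs_le.1 (hMb i')).2; linarith
      · have := (abs_le.1 (hMb i')).1; linarith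
def IsCommonAP (f₁ f₂ : ℝ → ℂ) (ε τ : ℝ) : Prop :=
  (∀ x : ℝ, ‖f₁ (x + τ) - f₁ x‖ < ε) ∧
  (∀ x : ℝ, ‖f₂ (x + τ) - f₂ x‖ < ε)

theorem common_almost_periods (f₁ f₂ : ℝ → ℂ)
    (h₁ : BohrAlmostPeriodic f₁) (h₂ : BohrAlmostPeriodic f₂) :
    ∀ ε > 0, ∃ l > 0, ∀ t₀ : ℝ, ∃ τ ∈ Set.Icc t₀ (t₀ + l),
      (∀ x : ℝ, ‖f₁ (x + τ) - f₁ x‖ < ε) ∧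
      (∀ x : ℝ, ‖f₂ (x + τ) - f₂ x‖ < ε) := by
  intro ε hε
  by_contra hc
  have bad : ∀ l > 0, ∃ t₀ : ℝ, ∀ τ ∈ Set.Icc t₀ (t₀ + l), ¬ IsCommonAP f₁ f₂ ε τ := by
    intro l hl
    by_contra hb
    push_neg at hb
    exact hc ⟨l, hl, fun t₀ => by
      obtain ⟨τ, hτ, hP⟩ := hb t₀
      exact ⟨τ, hτ, hP.1, hP.2⟩⟩
  obtain ⟨S₁, hS₁⟩ := bap_tb h₁ (ε/2) (by positivity)
  obtain ⟨S₂, hS₂⟩ := bap_tb h₂ (ε/2) (by positivity)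
  choose σ₁ hm₁ hσ₁ using hS₁
  choose σ₂ hm₂ hσ₂ using hS₂
  set N : ℕ := (S₁ ×ˢ S₂).card + 1 with hN
  obtain ⟨t, ht⟩ := separated_pts (IsCommonAP f₁ f₂ ε) bad N
  set g : Fin N → ↥(S₁ ×ˢ S₂) := fun i =>
    ⟨(σ₁ (t i), σ₂ (t i)), Finset.mem_product.2 ⟨hm₁ _, hm₂ _⟩⟩ with hg
  obtain ⟨i, j, hne, heq⟩ := Fintype.exists_ne_map_eq_of_card_lt g
    (by simp [Fintype.card_coe, hN])
  have heq' : σ₁ (t i) = σ₁ (t j) ∧ σ₂ (t i) = σ₂ (t j) := by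
    have := congrArg Subtype.val heq
    simp only [hg] at this
    exact ⟨congrArg Prod.fst this, congrArg Prod.snd this⟩
  have key : ∀ i j : Fin N, σ₁ (t i) = σ₁ (t j) → σ₂ (t i) = σ₂ (t j) →
      i < j → False := by
    intro i j e₁ e₂ hij
    refine ht i j hij ⟨fun x => ?_, fun x => ?_⟩
    · have h1 := hσ₁ (t j) (x - t i)
      have h2 := hσ₁ (t i) (x - t i)
      rw [← e₁] at h1
      have hx : ‖f₁ (x + (t j - t i)) - f₁ x‖ =
          dist (f₁ (x - t i + t j)) (f₁ (x - t i + t i)) := by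
        rw [Complex.dist_eq]
        congr 2 <;> [skip; skip] <;> congr 1 <;> ring
      rw [hx]
      calc dist (f₁ (x - t i + t j)) (f₁ (x - t i + t i))
          ≤ dist (f₁ (x - t i + t j)) (f₁ (x - t i + σ₁ (t i)))
            + dist (f₁ (x - t i + σ₁ (t i))) (f₁ (x - t i + t i)) := dist_triangle _ _ _
        _ < ε/2 + ε/2 := by gcongr; rw [dist_comm]; exact h2
        _ = ε := by ring
    · have h1 := hσ₂ (t j) (x - t i)
      have h2 := hσ₂ (t i) (x - t i)
      rw [← e₂] at h1
      have hx : ‖f₂ (x + (t j - t i)) - f₂ x‖ =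
          dist (f₂ (x - t i + t j)) (f₂ (x - t i + t i)) := by
        rw [Complex.dist_eq]
        congr 2 <;> [skip; skip] <;> congr 1 <;> ring
      rw [hx]
      calc dist (f₂ (x - t i + t j)) (f₂ (x - t i + t i))
          ≤ dist (f₂ (x - t i + t j)) (f₂ (x - t i + σ₂ (t i)))
            + dist (f₂ (x - t i + σ₂ (t i))) (f₂ (x - t i + t i)) := dist_triangle _ _ _
        _ < ε/2 + ε/2 := by gcongr; rw [dist_comm]; exact h2
        _ = ε := by ring
  rcases hne.lt_or_gt with hlt | hlt
  · exact key i j heq'.1 heq'.2 hlt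
  · exact key j i heq'.1.symm heq'.2.symm hlt
end
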